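/- Let n ≥ 1 and for each i = 1, …, n let d_i ≥ 0, h_i > 0, α_i > 0, β_i > 0, 0 < a_i − α_i, and a_i ≤ b_i. For λ ∈ [0,1] define x_i*(λ) = d_i / ( h_i·[ (λ/α_i)·ln(a_i/(a_i − α_i)) + ((1 − λ)/β_i)·ln((b_i + β_i)/b_i) ] ). If λ1, λ2 ∈ [0,1] with λ1 ≤ λ2, then x_i*(λ1) ≥ x_i*(λ2) for every i = 1, …, n. -/

import Mathlib

open MeasureTheory Set

/-- Possibility measure of an event `A` built from membership function `μ`
(with the convention `sSup ∅ = 0`, which holds for `Real.sSup`). -/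
noncomputable def Pos (μ : ℝ → ℝ) (A : Set ℝ) : ℝ := sSup (μ '' A)

/-- Necessity measure associated with `μ`. -/
noncomputable def Nec (μ : ℝ → ℝ) (A : Set ℝ) : ℝ := 1 - Pos μ Aᶜ

/-- The parametric measure `m_λ(A) = λ·Pos(A) + (1−λ)·Nec(A)`. -/
noncomputable def mMeas (l : ℝ) (μ : ℝ → ℝ) (A : Set ℝ) : ℝ :=
  l * Pos μ A + (1 - l) * Nec μ A

/-- The `m_λ`-expected value of the fuzzy variable with membership function `μ`:
`E_λ(ξ) = ∫_{−∞}^0 (m_λ([r,∞)) − 1) dr + ∫_0^∞ m_λ([r,∞)) dr`. -/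
noncomputable def Eexp (l : ℝ) (μ : ℝ → ℝ) : ℝ :=
  (∫ r in Set.Iic (0:ℝ), (mMeas l μ (Set.Ici r) - 1)) +
  (∫ r in Set.Ioi (0:ℝ), mMeas l μ (Set.Ici r))

/-- Membership function of the trapezoidal fuzzy variable `(r1,r2,r3,r4)`. -/
noncomputable def trapMF (r1 r2 r3 r4 : ℝ) : ℝ → ℝ := fun x =>
  if r1 ≤ x ∧ x ≤ r2 then (x - r1) / (r2 - r1)
  else if r2 ≤ x ∧ x ≤ r3 then 1
  else if r3 ≤ x ∧ x ≤ r4 then (r4 - x) / (r4 - r3)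
  else 0

/-- Membership function of the triangular fuzzy variable `(r1,r2,r4)`. -/
noncomputable def triMF (r1 r2 r4 : ℝ) : ℝ → ℝ := fun x =>
  if r1 ≤ x ∧ x ≤ r2 then (x - r1) / (r2 - r1)
  else if r2 ≤ x ∧ x ≤ r4 then (r4 - x) / (r4 - r2)
  else 0

/-- Membership function of the trapezoidal fuzzy variable `(a−α, a, b, b+β)`. -/
noncomputable def trapMF2 (a b α β : ℝ) : ℝ → ℝ := fun x =>
  if a - α ≤ x ∧ x ≤ a then 1 - (a - x) / α
  else if a ≤ x ∧ x ≤ b then 1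
  else if b ≤ x ∧ x ≤ b + β then 1 - (x - b) / β
  else 0

/-- Membership function of the triangular fuzzy variable `(a−α, a, a+β)`. -/
noncomputable def triMF2 (a α β : ℝ) : ℝ → ℝ := fun x =>
  if a - α ≤ x ∧ x ≤ a then 1 - (a - x) / α
  else if a ≤ x ∧ x ≤ a + β then 1 - (x - a) / β
  else 0

theorem stmt_16 (n : ℕ) (hn : 1 ≤ n) (d hh a b α β : Fin n → ℝ)
    (hd : ∀ i, 0 ≤ d i) (hhpos : ∀ i, 0 < hh i)
    (hα : ∀ i, 0 < α i) (hβ : ∀ i, 0 < β i)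
    (hpos : ∀ i, 0 < a i - α i) (hab : ∀ i, a i ≤ b i)
    (l1 l2 : ℝ) (hl1 : l1 ∈ Set.Icc (0:ℝ) 1) (hl2 : l2 ∈ Set.Icc (0:ℝ) 1)
    (hle : l1 ≤ l2) :
    ∀ i,
      d i / (hh i * (l2 / α i * Real.log (a i / (a i - α i)) +
        (1 - l2) / β i * Real.log ((b i + β i) / b i))) ≤
      d i / (hh i * (l1 / α i * Real.log (a i / (a i - α i)) +
        (1 - l1) / β i * Real.log ((b i + β i) / b i))) := by
  intro i
  set L1 := Real.log (a i / (a i - α i)) with hL1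
  set L2 := Real.log ((b i + β i) / b i) with hL2
  have hai : 0 < a i := lt_trans (hpos i) (by linarith [hα i])
  have hbi : 0 < b i := lt_of_lt_of_le hai (hab i)
  -- L1/α ≥ 1/a : log(a/(a-α)) = -log((a-α)/a) ≥ -((a-α)/a - 1) = α/a
  have hfrac : (0:ℝ) < (a i - α i) / a i := div_pos (hpos i) hai
  have hlog1 : Real.log ((a i - α i) / a i) ≤ (a i - α i) / a i - 1 :=
    Real.log_le_sub_one_of_pos hfrac
  have hL1eq : L1 = - Real.log ((a i - α i) / a i) := by
    rw [hL1, ← Real.log_inv]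
    congr 1
    field_simp
  have hL1ge : α i / a i ≤ L1 := by
    rw [hL1eq]
    have : (a i - α i) / a i - 1 = - (α i / a i) := by field_simp; ring
    linarith [hlog1, this ▸ hlog1]
  -- L2/β ≤ 1/b : log((b+β)/b) ≤ (b+β)/b - 1 = β/b
  have hL2le : L2 ≤ β i / b i := by
    have h2 : Real.log ((b i + β i) / b i) ≤ (b i + β i) / b i - 1 :=
      Real.log_le_sub_one_of_pos (div_pos (by linarith [hβ i]) hbi)
    have : (b i + β i) / b i - 1 = β i / b i := by field_simp; ring
    rw [hL2]; linarith [this ▸ h2]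
  have hL1pos : 0 < L1 := lt_of_lt_of_le (div_pos (hα i) hai) hL1ge
  have hL2pos : 0 < L2 := by
    rw [hL2]
    apply Real.log_pos
    rw [lt_div_iff₀ hbi]; linarith [hβ i]
  have hX : 1 / a i ≤ L1 / α i := by
    rw [div_le_div_iff₀ hai (hα i)]
    calc 1 * α i = α i / a i * a i := by field_simp
    _ ≤ L1 * a i := by
      apply mul_le_mul_of_nonneg_right hL1ge hai.le
  have hY : L2 / β i ≤ 1 / b i := by
    rw [div_le_div_iff₀ (hβ i) hbi]
    calc L2 * b i ≤ β i / b i * b i := mul_le_mul_of_nonneg_right hL2le hbi.le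
    _ = 1 * β i := by field_simp
  have hXY : L2 / β i ≤ L1 / α i := by
    have : 1 / b i ≤ 1 / a i := by
      apply one_div_le_one_div_of_le hai (hab i)
    linarith
  obtain ⟨h10, h11⟩ := hl1
  obtain ⟨h20, h21⟩ := hl2
  have hXpos : 0 < L1 / α i := div_pos hL1pos (hα i)
  have hYpos : 0 < L2 / β i := div_pos hL2pos (hβ i)
  have hE1pos : 0 < l1 / α i * L1 + (1 - l1) / β i * L2 := by
    have e1 : l1 / α i * L1 = l1 * (L1 / α i) := by ring
    have e2 : (1 - l1) / β i * L2 = (1 - l1) * (L2 / β i) := by ring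
    rw [e1, e2]
    nlinarith
  have hE2pos : 0 < l2 / α i * L1 + (1 - l2) / β i * L2 := by
    have e1 : l2 / α i * L1 = l2 * (L1 / α i) := by ring
    have e2 : (1 - l2) / β i * L2 = (1 - l2) * (L2 / β i) := by ring
    rw [e1, e2]
    nlinarith
  have hmono : l1 / α i * L1 + (1 - l1) / β i * L2 ≤
      l2 / α i * L1 + (1 - l2) / β i * L2 := by
    have key : (l2 - l1) * (L2 / β i) ≤ (l2 - l1) * (L1 / α i) :=
      mul_le_mul_of_nonneg_left hXY (by linarith)
    have e1 : ∀ l : ℝ, l / α i * L1 = l * (L1 / α i) := fun l => by ring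
    have e2 : ∀ l : ℝ, (1 - l) / β i * L2 = (1 - l) * (L2 / β i) := fun l => by ring
    rw [e1, e2, e1, e2]
    nlinarith
  gcongr
  all_goals first
    | exact hd i
    | exact mul_pos (hhpos i) hE1pos
    | exact (hhpos i).le
    | exact hmono
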